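/- Fix m, n ≥ 0 and let f, g : ℤ → ℤ be nondecreasing functions with f(x + m + 1) = f(x) + n + 1 and g(x + m + 1) = g(x) + n + 1 for all x. Suppose f(x) ≡ g(x) (mod n+1) for all x ∈ ℤ, and suppose f is not constant modulo n+1 (i.e. there exist x, y with f(x) ≢ f(y) mod n+1). Then f − g is a constant function whose value is a multiple of n+1; in particular f and g represent the same morphism of the cyclic category Λ. -/

import Mathlib

/-- Iterated equivariance. -/
lemma cyclic_per_aux (f : ℤ → ℤ) (M N : ℤ) (hfe : ∀ x, f (x + M) = f x + N) :
    ∀ (k x : ℤ), f (x + k * M) = f x + k * N := by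
  intro k
  induction k using Int.induction_on with
  | zero => simp
  | succ k ih =>
    intro x
    have h1 : x + ((k : ℤ) + 1) * M = (x + k * M) + M := by ring
    rw [h1, hfe, ih]; ring
  | pred k ih =>
    intro x
    have h1 : (x + (-(k : ℤ) - 1) * M) + M = x + (-(k : ℤ)) * M := by ring
    have h2 := hfe (x + (-(k : ℤ) - 1) * M)
    rw [h1, ih] at h2
    have : f (x + (-(k : ℤ) - 1) * M) = f x + (-(k : ℤ) - 1) * N := by linarith
    simpa using this

/-- A morphism of the cyclic category is determined by its underlying map of cyclic sets
whenever the latter is nonconstant: if two equivariant nondecreasing maps `f, g : ℤ → ℤ`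
agree modulo `n+1` and `f` is not constant modulo `n+1`, then `f - g` is a constant
multiple of `n+1`, so `f` and `g` represent the same morphism of `Λ`. -/
theorem cyclic_morphism_determined_by_residues (m n : ℕ) (f g : ℤ → ℤ)
    (hf : Monotone f) (hg : Monotone g)
    (hfe : ∀ x : ℤ, f (x + ((m : ℤ) + 1)) = f x + ((n : ℤ) + 1))
    (hge : ∀ x : ℤ, g (x + ((m : ℤ) + 1)) = g x + ((n : ℤ) + 1))
    (hcong : ∀ x : ℤ, ((n : ℤ) + 1) ∣ (f x - g x))
    (hnc : ∃ x y : ℤ, ¬ ((n : ℤ) + 1) ∣ (f x - f y)) :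
    ∃ c : ℤ, ∀ x : ℤ, f x - g x = ((n : ℤ) + 1) * c := by
  set M : ℤ := (m : ℤ) + 1 with hMdef
  set N : ℤ := (n : ℤ) + 1 with hNdef
  have hM : 0 < M := by positivity
  have hN : 0 < N := by positivity
  have hfk : ∀ (k x : ℤ), f (x + k * M) = f x + k * N := cyclic_per_aux f M N hfe
  have hgk : ∀ (k x : ℤ), g (x + k * M) = g x + k * N := cyclic_per_aux g M N hge
  -- key step: no strict inequality between values of f - g
  have key : ∀ a b : ℤ, f b - g b < f a - g a → False := by
    intro a b hlt
    -- the difference is a positive multiple of N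
    have hdvd : N ∣ (f a - g a) - (f b - g b) := by
      have := Int.dvd_sub (hcong a) (hcong b)
      simpa using this
    have hge1 : f b - g b + N ≤ f a - g a := by
      have := Int.le_of_dvd (by linarith) hdvd
      linarith
    -- translate b into [a, a + M)
    set b' : ℤ := a + (b - a) % M with hb'def
    have hb'eq : b' = b + (-((b - a) / M)) * M := by
      rw [hb'def, Int.emod_def]; ring
    have hab' : a ≤ b' := by
      have := Int.emod_nonneg (b - a) (by omega : M ≠ 0)
      omega
    have hb'a : b' < a + M := by
      have := Int.emod_lt_of_pos (b - a) hM
      omega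
    have hfb' : f b' = f b + (-((b - a) / M)) * N := by rw [hb'eq, hfk]
    have hgb' : g b' = g b + (-((b - a) / M)) * N := by rw [hb'eq, hgk]
    have hhb' : f b' - g b' = f b - g b := by rw [hfb', hgb']; ring
    have h1 : f a ≤ f b' := hf hab'
    have h2 : g b' ≤ g a + N := by
      have := hg (le_of_lt hb'a)
      rw [hge a] at this
      linarith
    have hfeq : f b' = f a := by linarith
    have hgeq : g b' = g a + N := by linarith
    -- now f is constant mod N
    have hres : ∀ x : ℤ, N ∣ f x - f a := by
      intro x
      set x' : ℤ := a + (x - a) % M with hx'def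
      have hx'eq : x' = x + (-((x - a) / M)) * M := by
        rw [hx'def, Int.emod_def]; ring
      have hax' : a ≤ x' := by
        have := Int.emod_nonneg (x - a) (by omega : M ≠ 0)
        omega
      have hx'a : x' < a + M := by
        have := Int.emod_lt_of_pos (x - a) hM
        omega
      have hfx' : f x' = f x + (-((x - a) / M)) * N := by rw [hx'eq, hfk]
      have hd1 : N ∣ f x - f x' := ⟨(x - a) / M, by rw [hfx']; ring⟩
      have hd2 : N ∣ f x' - f a := by
        rcases le_or_gt x' b' with hc | hc
        · have : f x' = f a := le_antisymm (hfeq ▸ hf hc) (hf hax')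
          simp [this]
        · have hgx' : g x' = g a + N := by
            have l1 : g b' ≤ g x' := hg (le_of_lt hc)
            have l2 : g x' ≤ g a + N := by
              have := hg (le_of_lt hx'a)
              rw [hge a] at this
              linarith
            linarith
          have : f x' - f a = (f x' - g x') - (f b' - g b') := by
            rw [hfeq, hgeq, hgx']; ring
          rw [this]
          exact Int.dvd_sub (hcong x') (hcong b')
      have : f x - f a = (f x - f x') + (f x' - f a) := by ring
      rw [this]
      exact Int.dvd_add hd1 hd2
    obtain ⟨x, y, hxy⟩ := hnc
    apply hxy
    have : f x - f y = (f x - f a) - (f y - f a) := by ring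
    rw [this]
    exact Int.dvd_sub (hres x) (hres y)
  have hconst : ∀ x : ℤ, f x - g x = f 0 - g 0 := by
    intro x
    rcases lt_trichotomy (f x - g x) (f 0 - g 0) with h | h | h
    · exact absurd h (fun h => key 0 x h)
    · exact h
    · exact absurd h (fun h => key x 0 h)
  obtain ⟨c, hc⟩ := hcong 0
  exact ⟨c, fun x => by rw [hconst x, hc]⟩
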